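/- Let U ∈ ℝ^{m×k} have orthonormal columns, S ∈ ℝ^{d×m}, and suppose SU has rank k. Let T ∈ ℝ^{k×k} be invertible and set Mᵖ = U T. If S Mᵖ has orthonormal columns, then for every i ∈ {1,…,k}, the i-th largest singular value of Mᵖ equals the reciprocal of the (k−i+1)-th largest singular value of SU: σ_i(Mᵖ) = 1/σ_{k−i+1}(SU). -/

import Mathlib

open Matrix BigOperators Polynomial

noncomputable def sval {m n : ℕ} (A : Matrix (Fin m) (Fin n) ℝ) (j : Fin n) : ℝ :=
  Real.sqrt ((Matrix.isHermitian_conjTranspose_mul_self A : (Aᵀ * A).IsHermitian).eigenvalues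
    (Tuple.sort (Matrix.isHermitian_conjTranspose_mul_self A : (Aᵀ * A).IsHermitian).eigenvalues j.rev))

noncomputable def specNorm {m n : ℕ} (A : Matrix (Fin m) (Fin n) ℝ) : ℝ :=
  sSup (Set.range (sval A))

noncomputable def sMin {m n : ℕ} (A : Matrix (Fin m) (Fin n) ℝ) : ℝ :=
  sInf (Set.range (sval A))

noncomputable def frob {m n : ℕ} (A : Matrix (Fin m) (Fin n) ℝ) : ℝ :=
  Real.sqrt (∑ i, ∑ j, (A i j)^2)

noncomputable def enorm {m : ℕ} (x : Fin m → ℝ) : ℝ := Real.sqrt (∑ i, (x i)^2)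

def UpperTri {k n : ℕ} (R : Matrix (Fin k) (Fin n) ℝ) : Prop :=
  ∀ (i : Fin k) (j : Fin n), (j : ℕ) < (i : ℕ) → R i j = 0

def lead {k n : ℕ} (R : Matrix (Fin k) (Fin n) ℝ) (ℓ : ℕ) (h1 : ℓ ≤ k) (h2 : ℓ ≤ n) :
    Matrix (Fin ℓ) (Fin ℓ) ℝ := fun i j => R (Fin.castLE h1 i) (Fin.castLE h2 j)

def topRight {k n : ℕ} (R : Matrix (Fin k) (Fin n) ℝ) (ℓ : ℕ) (h1 : ℓ ≤ k) :
    Matrix (Fin ℓ) (Fin (n - ℓ)) ℝ :=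
  fun i j => R (Fin.castLE h1 i) ⟨ℓ + j.1, by have := j.isLt; omega⟩

def trail {k n : ℕ} (R : Matrix (Fin k) (Fin n) ℝ) (ℓ : ℕ) :
    Matrix (Fin (k - ℓ)) (Fin (n - ℓ)) ℝ :=
  fun i j => R ⟨ℓ + i.1, by have := i.isLt; omega⟩ ⟨ℓ + j.1, by have := j.isLt; omega⟩

/-- charpoly is invariant under conjugation by an invertible matrix. -/
lemma my_charpoly_conj {k : ℕ} (P A : Matrix (Fin k) (Fin k) ℝ) (hP : IsUnit P.det) :
    (P * A * P⁻¹).charpoly = A.charpoly := by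
  set Cm : ℝ →+* ℝ[X] := Polynomial.C
  have hPQ : Cm.mapMatrix P * Cm.mapMatrix P⁻¹ = 1 := by
    rw [← _root_.map_mul, Matrix.mul_nonsing_inv _ hP, _root_.map_one]
  have key : charmatrix (P * A * P⁻¹)
      = Cm.mapMatrix P * charmatrix A * Cm.mapMatrix P⁻¹ := by
    unfold charmatrix
    rw [Matrix.mul_sub, Matrix.sub_mul]
    congr 1
    · rw [← (Matrix.scalar_commute (X : ℝ[X]) (fun r => Commute.all _ r) (Cm.mapMatrix P)).eq,
        Matrix.mul_assoc, hPQ, Matrix.mul_one]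
    · rw [← _root_.map_mul, ← _root_.map_mul]
  have hdet : (Cm.mapMatrix P).det * (Cm.mapMatrix P⁻¹).det = 1 := by
    rw [← Matrix.det_mul, hPQ, Matrix.det_one]
  unfold Matrix.charpoly
  rw [key, Matrix.det_mul, Matrix.det_mul, mul_right_comm, hdet, one_mul]

/-- roots of the charpoly of a unitary conjugate of a diagonal matrix. -/
lemma my_roots_charpoly_diag {k : ℕ} (V : Matrix (Fin k) (Fin k) ℝ) (d : Fin k → ℝ)
    (hV : V * star V = 1) :
    (V * Matrix.diagonal d * star V).charpoly.roots = Finset.univ.val.map d := by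
  have hVdet : IsUnit V.det := Matrix.isUnit_det_of_right_inverse hV
  have hVinv : V⁻¹ = star V := Matrix.inv_eq_right_inv hV
  rw [← hVinv, my_charpoly_conj V _ hVdet,
    Matrix.charpoly_of_upperTriangular _ (Matrix.blockTriangular_diagonal d)]
  have h1 : (∏ i : Fin k, (X - Polynomial.C (Matrix.diagonal d i i)))
      = ((Finset.univ.val.map d).map (fun a => X - Polynomial.C a)).prod := by
    rw [Multiset.map_map, Finset.prod_eq_multiset_prod]
    simp
  rw [h1, Polynomial.roots_multiset_prod_X_sub_C]

lemma my_roots_charpoly {k : ℕ} (A : Matrix (Fin k) (Fin k) ℝ) (hA : A.IsHermitian) :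
    A.charpoly.roots = Finset.univ.val.map hA.eigenvalues := by
  have hV : (hA.eigenvectorUnitary : Matrix (Fin k) (Fin k) ℝ)
      * star (hA.eigenvectorUnitary : Matrix (Fin k) (Fin k) ℝ) = 1 :=
    Matrix.mem_unitaryGroup_iff.mp hA.eigenvectorUnitary.2
  have hsp := hA.spectral_theorem
  rw [RCLike.ofReal_real_eq_id, Function.id_comp] at hsp
  rw [congrArg (fun M => M.charpoly.roots) hsp]
  exact my_roots_charpoly_diag _ _ hV

lemma my_roots_charpoly_inv {k : ℕ} (A : Matrix (Fin k) (Fin k) ℝ) (hA : A.IsHermitian)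
    (h0 : ∀ i, hA.eigenvalues i ≠ 0) :
    A⁻¹.charpoly.roots = Finset.univ.val.map (fun i => (hA.eigenvalues i)⁻¹) := by
  set V : Matrix (Fin k) (Fin k) ℝ := (hA.eigenvectorUnitary : Matrix (Fin k) (Fin k) ℝ) with hVdef
  have hV : V * star V = 1 := Matrix.mem_unitaryGroup_iff.mp hA.eigenvectorUnitary.2
  have hV' : star V * V = 1 := Matrix.mem_unitaryGroup_iff'.mp hA.eigenvectorUnitary.2
  have hsp := hA.spectral_theorem
  rw [RCLike.ofReal_real_eq_id, Function.id_comp] at hsp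
  have hAinv : A⁻¹ = V * Matrix.diagonal (fun i => (hA.eigenvalues i)⁻¹) * star V := by
    have hdinv : (Matrix.diagonal hA.eigenvalues)⁻¹
        = Matrix.diagonal (fun i => (hA.eigenvalues i)⁻¹) := by
      apply Matrix.inv_eq_right_inv
      rw [Matrix.diagonal_mul_diagonal]
      convert Matrix.diagonal_one
      exact mul_inv_cancel₀ (h0 _)
    conv_lhs => rw [hsp]
    simp only [Unitary.conjStarAlgAut_apply, Unitary.coe_star]
    rw [Matrix.mul_inv_rev, Matrix.mul_inv_rev, Matrix.inv_eq_right_inv hV',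
      Matrix.inv_eq_right_inv hV, hdinv, Matrix.mul_assoc]
  rw [hAinv]
  exact my_roots_charpoly_diag _ _ hV

/-- monotone tuples with the same multiset of values are equal -/
lemma my_monotone_tuple_eq {n : ℕ} {f g : Fin n → ℝ} (hf : Monotone f) (hg : Monotone g)
    (h : Finset.univ.val.map f = Finset.univ.val.map g) : f = g := by
  rw [Fin.univ_val_map, Fin.univ_val_map] at h
  exact List.ofFn_injective
    (List.Perm.eq_of_sortedLE hf.sortedLE_ofFn hg.sortedLE_ofFn (Multiset.coe_eq_coe.mp h))

lemma my_key {k : ℕ} (A1 A2 T : Matrix (Fin k) (Fin k) ℝ)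
    (hH1 : A1.IsHermitian) (hH2 : A2.IsHermitian)
    (hT : IsUnit T.det)
    (hA1 : A1 = Tᵀ * T) (hTBT : Tᵀ * A2 * T = 1)
    (hnn : ∀ j, 0 ≤ hH2.eigenvalues j) :
    ∀ i : Fin k, Real.sqrt (hH1.eigenvalues (Tuple.sort hH1.eigenvalues i.rev))
      = (Real.sqrt (hH2.eigenvalues (Tuple.sort hH2.eigenvalues i.rev.rev)))⁻¹ := by
  have hTt : IsUnit Tᵀ.det := by rwa [Matrix.det_transpose]
  have hdet1 : Tᵀ.det * A2.det * T.det = 1 := by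
    have := congrArg Matrix.det hTBT
    simpa [Matrix.det_mul] using this
  have hdet2 : IsUnit A2.det :=
    IsUnit.of_mul_eq_one (T.det * Tᵀ.det) (by linear_combination hdet1)
  have hpos : ∀ j, 0 < hH2.eigenvalues j := by
    intro j
    rcases (hnn j).lt_or_eq with h | h
    · exact h
    · exfalso
      have hd := hH2.det_eq_prod_eigenvalues
      have hz : A2.det = 0 := by
        rw [hd]
        exact Finset.prod_eq_zero (Finset.mem_univ j) (by simp [← h])
      exact hdet2.ne_zero hz
  have hA2 : A2 = Tᵀ⁻¹ * T⁻¹ := by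
    calc A2 = Tᵀ⁻¹ * (Tᵀ * A2 * T) * T⁻¹ := by
          rw [Matrix.mul_assoc Tᵀ A2 T, Matrix.nonsing_inv_mul_cancel_left _ _ hTt,
            Matrix.mul_nonsing_inv_cancel_right _ _ hT]
      _ = Tᵀ⁻¹ * T⁻¹ := by rw [hTBT, Matrix.mul_one]
  have hA2inv : A2⁻¹ = T * A1 * T⁻¹ := by
    rw [hA2, Matrix.mul_inv_rev, Matrix.nonsing_inv_nonsing_inv _ hT,
      Matrix.nonsing_inv_nonsing_inv _ hTt, hA1,
      ← Matrix.mul_assoc T Tᵀ T, Matrix.mul_nonsing_inv_cancel_right _ _ hT]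
  have h0 : ∀ j, hH2.eigenvalues j ≠ 0 := fun j => (hpos j).ne'
  have hroots : Finset.univ.val.map hH1.eigenvalues
      = Finset.univ.val.map (fun j => (hH2.eigenvalues j)⁻¹) := by
    rw [← my_roots_charpoly A1 hH1, ← my_roots_charpoly_inv A2 hH2 h0, hA2inv,
      my_charpoly_conj T A1 hT]
  set f := hH1.eigenvalues ∘ Tuple.sort hH1.eigenvalues with hfdef
  set g := hH2.eigenvalues ∘ Tuple.sort hH2.eigenvalues with hgdef
  have hf : Monotone f := Tuple.monotone_sort _
  have hg : Monotone g := Tuple.monotone_sort _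
  have hgpos : ∀ j, 0 < g j := fun j => hpos _
  have hh : Monotone (fun j : Fin k => (g j.rev)⁻¹) := by
    intro a b hab
    exact inv_anti₀ (hgpos b.rev) (hg (Fin.rev_le_rev.mpr hab))
  have hmf : Finset.univ.val.map f = Finset.univ.val.map hH1.eigenvalues := by
    rw [hfdef, ← Multiset.map_map hH1.eigenvalues (Tuple.sort hH1.eigenvalues),
      Multiset.map_univ_val_equiv]
  have hmh : Finset.univ.val.map (fun j : Fin k => (g j.rev)⁻¹)
      = Finset.univ.val.map (fun j => (hH2.eigenvalues j)⁻¹) := by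
    have e1 : (fun j : Fin k => (g j.rev)⁻¹)
        = ((fun x => (hH2.eigenvalues x)⁻¹) ∘ Tuple.sort hH2.eigenvalues) ∘ Fin.revPerm := by
      funext j; simp [hgdef]
    rw [e1, ← Multiset.map_map, Multiset.map_univ_val_equiv,
      ← Multiset.map_map, Multiset.map_univ_val_equiv]
  have heq : f = fun j : Fin k => (g j.rev)⁻¹ :=
    my_monotone_tuple_eq hf hh (by rw [hmf, hmh, hroots])
  intro i
  have h2 : hH1.eigenvalues (Tuple.sort hH1.eigenvalues i.rev)
      = (hH2.eigenvalues (Tuple.sort hH2.eigenvalues i.rev.rev))⁻¹ := congrFun heq i.rev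
  rw [h2, Real.sqrt_inv]

theorem precond_singular_values {m d k : ℕ}
    (U : Matrix (Fin m) (Fin k) ℝ) (hU : Uᵀ * U = 1)
    (S : Matrix (Fin d) (Fin m) ℝ) (hrk : (S * U).rank = k)
    (T : Matrix (Fin k) (Fin k) ℝ) (hT : IsUnit T.det)
    (hOrth : (S * (U * T))ᵀ * (S * (U * T)) = 1) :
    ∀ i : Fin k, sval (U * T) i = (sval (S * U) i.rev)⁻¹ := by
  intro i
  unfold sval
  have hA1 : (U * T)ᴴ * (U * T) = Tᵀ * T := by
    rw [Matrix.conjTranspose_eq_transpose_of_trivial, Matrix.transpose_mul, Matrix.mul_assoc,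
      ← Matrix.mul_assoc Uᵀ U T, hU, Matrix.one_mul]
  have hTBT : Tᵀ * ((S * U)ᴴ * (S * U)) * T = 1 := by
    rw [Matrix.conjTranspose_eq_transpose_of_trivial]
    simp only [Matrix.transpose_mul, Matrix.mul_assoc] at hOrth ⊢
    exact hOrth
  exact my_key ((U*T)ᴴ*(U*T)) ((S*U)ᴴ*(S*U)) T
    (Matrix.isHermitian_conjTranspose_mul_self (U*T)) (Matrix.isHermitian_conjTranspose_mul_self (S*U))
    hT hA1 hTBT (fun j => Matrix.eigenvalues_conjTranspose_mul_self_nonneg (S*U) j) i
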